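/- In the load-side Cournot game, fix a load l and fix the other loads' day-ahead participations d_k^{DA} ∈ ℝ for k ≠ l. Then the function d_l^{DA} ↦ c_l (load l's expenditure) attains its minimum over ℝ at the unique point (1 − α^{DA}/(2·α^{RT}))·d_l + (1/2)·Σ_{k≠l}(d_k − d_k^{DA}). -/
import Mathlib


/-- Best response in the load-side Cournot game. Fix `α^{RT} > α^{DA} > 0`,
`β^{DA} ∈ ℝ`, `L ≥ 1` loads with demands `d_l > 0`, a load `l`, and the other loads'
day-ahead participations `d_k^{DA} ≥ 0` (`k ≠ l`). Load `l`'s expenditure, as a function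
`c` of its own day-ahead participation `x` (with `λ^{DA} = α^{DA}·(x + ∑_{k≠l} d_k^{DA})
+ β^{DA}`, `λ^{RT} = α^{RT}·((d_l - x) + ∑_{k≠l}(d_k - d_k^{DA})) + λ^{DA}`,
`c x = λ^{DA}·x + λ^{RT}·(d_l - x)`), attains its minimum over `ℝ` at the unique point
`(1 - α^{DA}/(2 α^{RT}))·d_l + (1/2)·∑_{k≠l}(d_k - d_k^{DA})`. -/
theorem cournot_best_response
    (L : ℕ) (hL : 1 ≤ L)
    (aDA aRT bDA : ℝ) (h0 : 0 < aDA) (hlt : aDA < aRT)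
    (dl : Fin L → ℝ) (hdl : ∀ k, 0 < dl k)
    (l : Fin L) (dDA : Fin L → ℝ) (hdDA : ∀ k, 0 ≤ dDA k)
    (c : ℝ → ℝ)
    (hc : ∀ x : ℝ,
      c x = (aDA * (x + ∑ k ∈ Finset.univ.erase l, dDA k) + bDA) * x
        + (aRT * ((dl l - x) + ∑ k ∈ Finset.univ.erase l, (dl k - dDA k))
            + (aDA * (x + ∑ k ∈ Finset.univ.erase l, dDA k) + bDA)) * (dl l - x))
    (xstar : ℝ)
    (hx : xstar = (1 - aDA / (2 * aRT)) * dl l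
        + 1 / 2 * ∑ k ∈ Finset.univ.erase l, (dl k - dDA k)) :
    (∀ x : ℝ, c xstar ≤ c x) ∧ (∀ x : ℝ, c x = c xstar → x = xstar) := by
  have hR : (0:ℝ) < aRT := h0.trans hlt
  have key : ∀ x : ℝ, c x = c xstar + aRT * (x - xstar)^2 := by
    intro x
    rw [hc x, hc xstar, hx]
    field_simp
    ring
  constructor
  · intro x
    rw [key x]
    nlinarith [sq_nonneg (x - xstar)]
  · intro x h
    rw [key x] at h
    have : aRT * (x - xstar)^2 = 0 := by linarith
    have h2 : (x - xstar)^2 = 0 := by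
      rcases mul_eq_zero.mp this with h' | h'
      · exact absurd h' (ne_of_gt hR)
      · exact h'
    have := pow_eq_zero_iff (n := 2) (by norm_num) |>.mp h2
    linarith
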